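/- arXiv:2011.13296 — 2 statements merged into one kernel-verified Lean document; each statement's English description precedes it below -/
import Mathlib

section
/- Let (x_k)_{k∈ℕ} be a sequence of nonnegative real numbers and let c > 0 be a constant such that the relative stability criterion holds: for every k ∈ ℕ the series ∑_{i=1}^∞ x_{k+i} converges and c · ∑_{i=1}^∞ x_{k+i} ≤ x_k. Then for every k ∈ ℕ and every ε > 0 there exists an integer n with 0 ≤ n ≤ ⌈1/(c·ε)⌉ such that x_{k+n} ≤ ε · x_k. -/
/-- Relative stability criterion (Lemma 5.3 of the paper): if a nonnegative
sequence satisfies `c * ∑_{i=1}^∞ x_{k+i} ≤ x_k` for all `k`, then for every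
`k` and `ε > 0` there is `n ≤ ⌈1/(c ε)⌉` with `x_{k+n} ≤ ε x_k`. -/
theorem relative_stability_decrease
    (x : ℕ → ℝ) (c : ℝ) (hc : 0 < c)
    (hx : ∀ k, 0 ≤ x k)
    (hsum : ∀ k, Summable (fun i : ℕ => x (k + (i + 1))))
    (hstab : ∀ k, c * ∑' i : ℕ, x (k + (i + 1)) ≤ x k) :
    ∀ k : ℕ, ∀ ε : ℝ, 0 < ε →
      ∃ n : ℕ, n ≤ ⌈1 / (c * ε)⌉₊ ∧ x (k + n) ≤ ε * x k := by
  intro k ε hε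
  by_contra h
  push_neg at h
  set N := ⌈1 / (c * ε)⌉₊ with hN
  have hxk : 0 < x k := by
    rcases lt_or_eq_of_le (hx k) with h0 | h0
    · exact h0
    · exfalso
      have h2 := h 0 (Nat.zero_le _)
      rw [Nat.add_zero] at h2
      nlinarith
  -- each term x (k + (i+1)) > ε * x k for i < N
  have hterm : ∀ i ∈ Finset.range N, ε * x k < x (k + (i + 1)) := by
    intro i hi
    have : i + 1 ≤ N := Finset.mem_range.mp hi
    exact h (i + 1) this
  have hpartial : (N : ℝ) * (ε * x k) ≤ ∑ i ∈ Finset.range N, x (k + (i + 1)) := by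
    calc (N : ℝ) * (ε * x k) = ∑ _i ∈ Finset.range N, ε * x k := by
          rw [Finset.sum_const, Finset.card_range, nsmul_eq_mul]
      _ ≤ ∑ i ∈ Finset.range N, x (k + (i + 1)) :=
          Finset.sum_le_sum fun i hi => le_of_lt (hterm i hi)
  have htsum : ∑ i ∈ Finset.range N, x (k + (i + 1)) ≤ ∑' i : ℕ, x (k + (i + 1)) :=
    Summable.sum_le_tsum _ (fun i _ => hx _) (hsum k)
  have hchain : c * ((N : ℝ) * (ε * x k)) ≤ x k := by
    calc c * ((N : ℝ) * (ε * x k)) ≤ c * ∑' i : ℕ, x (k + (i + 1)) := by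
          apply mul_le_mul_of_nonneg_left (le_trans hpartial htsum) hc.le
      _ ≤ x k := hstab k
  have hNge : 1 / (c * ε) ≤ (N : ℝ) := Nat.le_ceil _
  have hcε : 0 < c * ε := mul_pos hc hε
  have hNpos : 0 < (N : ℝ) := lt_of_lt_of_le (by positivity) hNge
  have h1 : c * ε * (N : ℝ) ≤ 1 := by
    have := hchain
    nlinarith
  have h2 : 1 ≤ c * ε * (N : ℝ) := by
    rw [div_le_iff₀ hcε] at hNge
    linarith
  -- Use strictness: the partial sum inequality is strict since N ≥ 1
  have hN1 : 1 ≤ N := Nat.one_le_ceil_iff.mpr (by positivity)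
  have hstrict : (N : ℝ) * (ε * x k) < ∑ i ∈ Finset.range N, x (k + (i + 1)) := by
    calc (N : ℝ) * (ε * x k) = ∑ _i ∈ Finset.range N, ε * x k := by
          rw [Finset.sum_const, Finset.card_range, nsmul_eq_mul]
      _ < ∑ i ∈ Finset.range N, x (k + (i + 1)) := by
          apply Finset.sum_lt_sum_of_nonempty
          · exact ⟨0, Finset.mem_range.mpr hN1⟩
          · exact hterm
  have hchain' : c * ((N : ℝ) * (ε * x k)) < x k :=
    lt_of_lt_of_le (by nlinarith) (hstab k)
  nlinarith
end

section
/- Let (x_k)_{k∈ℕ} be a sequence of nonnegative real numbers satisfying the relative stability criterion with constant c > 0, and let m ∈ ℕ be such that c·m > 1. Then there exists a strictly increasing sequence of indices (k_l)_{l∈ℕ} with k_0 = 0 and 1 ≤ k_{l+1} − k_l ≤ m for all l, such that the subsequence converges r-linearly: for all l ∈ ℕ, x_{k_l} ≤ ((1/(c·m))^{1/m})^{k_l} · x_0. In particular (since c·m > 1) the rate (1/(c·m))^{1/m} is strictly less than 1, so the subsequence (x_{k_l})_l converges to zero r-linearly with respect to the original index. -/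
/-- r-linear convergence for subsequences (Lemma 5.2 of the paper): a
nonnegative sequence satisfying the relative stability criterion with
constant `c > 0` admits, for every `m` with `c·m > 1`, a subsequence
with gaps at most `m` converging r-linearly with rate `(1/(c m))^(1/m) < 1`. -/
theorem relative_stability_rlinear_subsequence
    (x : ℕ → ℝ) (c : ℝ) (hc : 0 < c)
    (hx : ∀ k, 0 ≤ x k)
    (hsum : ∀ k, Summable (fun i : ℕ => x (k + (i + 1))))
    (hstab : ∀ k, c * ∑' i : ℕ, x (k + (i + 1)) ≤ x k)
    (m : ℕ) (hm : 1 < c * (m : ℝ)) :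
    (1 / (c * (m : ℝ))) ^ ((1 : ℝ) / (m : ℝ)) < 1 ∧
    ∃ ks : ℕ → ℕ, ks 0 = 0 ∧ StrictMono ks ∧
      (∀ l : ℕ, 1 ≤ ks (l + 1) - ks l ∧ ks (l + 1) - ks l ≤ m) ∧
      (∀ l : ℕ,
        x (ks l) ≤ ((1 / (c * (m : ℝ))) ^ ((1 : ℝ) / (m : ℝ))) ^ (ks l) * x 0) := by
  have hm0 : 0 < m := by
    by_contra h
    push_neg at h
    interval_cases m
    simp at hm; linarith
  have hmR : (0 : ℝ) < m := by exact_mod_cast hm0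
  have hcm : (0 : ℝ) < c * m := lt_trans one_pos hm
  set q : ℝ := (1 / (c * (m : ℝ))) ^ ((1 : ℝ) / (m : ℝ)) with hq
  have hbase_pos : (0 : ℝ) < 1 / (c * m) := by positivity
  have hbase_lt : 1 / (c * m) < 1 := by
    rw [div_lt_one hcm]; exact hm
  have hq_pos : 0 < q := Real.rpow_pos_of_pos hbase_pos _
  have hq_lt : q < 1 := Real.rpow_lt_one hbase_pos.le hbase_lt (by positivity)
  have hqm : q ^ m = 1 / (c * m) := by
    rw [hq, ← Real.rpow_natCast ((1 / (c * m)) ^ ((1:ℝ)/m)) m,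
      ← Real.rpow_mul hbase_pos.le]
    rw [one_div_mul_cancel (ne_of_gt hmR), Real.rpow_one]
  -- key step: from each k we can move at most m steps and divide by c*m
  have step : ∀ k, ∃ j, 1 ≤ j ∧ j ≤ m ∧ c * m * x (k + j) ≤ x k := by
    intro k
    obtain ⟨i0, hi0, hmin⟩ := Finset.exists_min_image (Finset.range m)
      (fun i => x (k + (i + 1))) ⟨0, Finset.mem_range.2 hm0⟩
    refine ⟨i0 + 1, Nat.le_add_left 1 i0, Finset.mem_range.1 hi0, ?_⟩
    have hsum_le : ∑ i ∈ Finset.range m, x (k + (i + 1)) ≤ ∑' i, x (k + (i + 1)) :=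
      Summable.sum_le_tsum _ (fun i _ => hx _) (hsum k)
    have hcard : (m : ℝ) * x (k + (i0 + 1)) ≤ ∑ i ∈ Finset.range m, x (k + (i + 1)) := by
      have := Finset.card_nsmul_le_sum (Finset.range m)
        (fun i => x (k + (i + 1))) (x (k + (i0 + 1))) (fun i hi => hmin i hi)
      simpa [nsmul_eq_mul] using this
    have : c * ((m : ℝ) * x (k + (i0 + 1))) ≤ x k :=
      le_trans (by nlinarith [le_trans hcard hsum_le]) (hstab k)
    linarith
  choose j hj1 hj2 hj3 using step
  -- define the index sequence
  set ks : ℕ → ℕ := fun l => Nat.rec 0 (fun _ k => k + j k) l with hks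
  have hks0 : ks 0 = 0 := rfl
  have hkss : ∀ l, ks (l + 1) = ks l + j (ks l) := fun l => rfl
  have hmono : StrictMono ks := by
    apply strictMono_nat_of_lt_succ
    intro l
    rw [hkss]
    have := hj1 (ks l)
    omega
  have hgap : ∀ l : ℕ, 1 ≤ ks (l + 1) - ks l ∧ ks (l + 1) - ks l ≤ m := by
    intro l
    rw [hkss]
    have h1 := hj1 (ks l); have h2 := hj2 (ks l)
    omega
  refine ⟨hq_lt, ks, hks0, hmono, hgap, ?_⟩
  intro l
  induction l with
  | zero => simp [hks0]
  | succ l ih =>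
    have hj := hj3 (ks l)
    have hx1 : x (ks l + j (ks l)) ≤ (1 / (c * m)) * x (ks l) := by
      rw [one_div, inv_mul_eq_div, le_div_iff₀ hcm]
      nlinarith [hx (ks l + j (ks l))]
    have hx2 : x (ks l + j (ks l)) ≤ q ^ m * (q ^ (ks l) * x 0) := by
      calc x (ks l + j (ks l)) ≤ (1 / (c * m)) * x (ks l) := hx1
        _ ≤ (1 / (c * m)) * (q ^ (ks l) * x 0) := by
            exact mul_le_mul_of_nonneg_left ih hbase_pos.le
        _ = q ^ m * (q ^ (ks l) * x 0) := by rw [hqm]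
    have hpow : q ^ (ks l + m) ≤ q ^ (ks l + j (ks l)) :=
      pow_le_pow_of_le_one hq_pos.le hq_lt.le (by have := hj2 (ks l); omega)
    calc x (ks (l + 1)) = x (ks l + j (ks l)) := by rw [hkss]
      _ ≤ q ^ m * (q ^ (ks l) * x 0) := hx2
      _ = q ^ (ks l + m) * x 0 := by ring
      _ ≤ q ^ (ks l + j (ks l)) * x 0 := mul_le_mul_of_nonneg_right hpow (hx 0)
      _ = q ^ (ks (l + 1)) * x 0 := by rw [hkss]
end
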